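/- There exists an instantaneous lossless source encoder with causal side information satisfying (1/n) E[L(X^n||Y^n)] ≤ (1/n) Σ_{i=1}^n (1 + H(X_i | X^{i-1}, Y^i)); in particular the expected rate exceeds the causally conditional entropy rate by at most 1 bit per symbol. -/

import Mathlib

open scoped Classical
open Real

noncomputable section

variable {α β : Type} [Fintype α] [DecidableEq α] [Fintype β] [DecidableEq β]

/-- Probability of the event `E` under the joint pmf `p` of `(X^n, Y^n)`. -/
def pr {n : ℕ} (p : (Fin n → α) → (Fin n → β) → ℝ)
    (E : (Fin n → α) → (Fin n → β) → Prop) : ℝ :=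
  ∑ x, ∑ y, if E x y then p x y else 0

/-- `p` is a probability mass function on pairs of sequences. -/
def IsPmf {n : ℕ} (p : (Fin n → α) → (Fin n → β) → ℝ) : Prop :=
  (∀ x y, 0 ≤ p x y) ∧ ∑ x, ∑ y, p x y = 1

/-- The conditional pmf `p(x_i | x^{i-1}, y^{i-d})` evaluated along `(x, y)`. -/
def condX {n : ℕ} (p : (Fin n → α) → (Fin n → β) → ℝ) (d : ℕ) (i : Fin n)
    (x : Fin n → α) (y : Fin n → β) : ℝ :=
  pr p (fun x' y' => (∀ j, j < i → x' j = x j) ∧ x' i = x i ∧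
      ∀ j : Fin n, (j : ℕ) + d ≤ (i : ℕ) → y' j = y j) /
  pr p (fun x' y' => (∀ j, j < i → x' j = x j) ∧
      ∀ j : Fin n, (j : ℕ) + d ≤ (i : ℕ) → y' j = y j)

/-- The conditional pmf `p(y_i | y^{i-1}, x^{i-d})` evaluated along `(x, y)`. -/
def condY {n : ℕ} (p : (Fin n → α) → (Fin n → β) → ℝ) (d : ℕ) (i : Fin n)
    (x : Fin n → α) (y : Fin n → β) : ℝ :=
  pr p (fun x' y' => (∀ j, j < i → y' j = y j) ∧ y' i = y i ∧
      ∀ j : Fin n, (j : ℕ) + d ≤ (i : ℕ) → x' j = x j) /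
  pr p (fun x' y' => (∀ j, j < i → y' j = y j) ∧
      ∀ j : Fin n, (j : ℕ) + d ≤ (i : ℕ) → x' j = x j)

/-- Causally conditioned pmf `p(x^n || y^{n-d}) = ∏ᵢ p(xᵢ | x^{i-1}, y^{i-d})`. -/
def ccX {n : ℕ} (p : (Fin n → α) → (Fin n → β) → ℝ) (d : ℕ)
    (x : Fin n → α) (y : Fin n → β) : ℝ :=
  ∏ i, condX p d i x y

/-- Causally conditioned pmf `p(y^n || x^{n-d}) = ∏ᵢ p(yᵢ | y^{i-1}, x^{i-d})`. -/
def ccY {n : ℕ} (p : (Fin n → α) → (Fin n → β) → ℝ) (d : ℕ)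
    (x : Fin n → α) (y : Fin n → β) : ℝ :=
  ∏ i, condY p d i x y

/-- Marginal pmf of `X^n`. -/
def pX {n : ℕ} (p : (Fin n → α) → (Fin n → β) → ℝ) (x : Fin n → α) : ℝ := ∑ y, p x y

/-- Marginal pmf of `Y^n`. -/
def pY {n : ℕ} (p : (Fin n → α) → (Fin n → β) → ℝ) (y : Fin n → β) : ℝ := ∑ x, p x y

/-- `H(X^n)` in bits. -/
def HX {n : ℕ} (p : (Fin n → α) → (Fin n → β) → ℝ) : ℝ :=
  -(∑ x, ∑ y, p x y * Real.logb 2 (pX p x))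

/-- `H(Y^n)` in bits. -/
def HY {n : ℕ} (p : (Fin n → α) → (Fin n → β) → ℝ) : ℝ :=
  -(∑ x, ∑ y, p x y * Real.logb 2 (pY p y))

/-- Joint entropy `H(X^n, Y^n)` in bits. -/
def Hjoint {n : ℕ} (p : (Fin n → α) → (Fin n → β) → ℝ) : ℝ :=
  -(∑ x, ∑ y, p x y * Real.logb 2 (p x y))

/-- Conditional entropy `H(X_i | X^{i-1}, Y^{i-d})` in bits. -/
def HcondX {n : ℕ} (p : (Fin n → α) → (Fin n → β) → ℝ) (d : ℕ) (i : Fin n) : ℝ :=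
  -(∑ x, ∑ y, p x y * Real.logb 2 (condX p d i x y))

/-- Conditional entropy `H(Y_i | Y^{i-1}, X^{i-d})` in bits. -/
def HcondY {n : ℕ} (p : (Fin n → α) → (Fin n → β) → ℝ) (d : ℕ) (i : Fin n) : ℝ :=
  -(∑ x, ∑ y, p x y * Real.logb 2 (condY p d i x y))

/-- Causally conditional entropy `H(X^n || Y^{n-d}) = Σᵢ H(Xᵢ | X^{i-1}, Y^{i-d})`. -/
def HccX {n : ℕ} (p : (Fin n → α) → (Fin n → β) → ℝ) (d : ℕ) : ℝ := ∑ i, HcondX p d i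

/-- Causally conditional entropy `H(Y^n || X^{n-d})`. -/
def HccY {n : ℕ} (p : (Fin n → α) → (Fin n → β) → ℝ) (d : ℕ) : ℝ := ∑ i, HcondY p d i

/-- Conditional mutual information `I(Y^i; X_i | X^{i-1})`
(as the expectation of `log (p(xᵢ|x^{i-1},y^i) / p(xᵢ|x^{i-1}))`;
note `condX p n` is `p(xᵢ|x^{i-1})`, conditioning on no `y`'s at all). -/
def cmiYX {n : ℕ} (p : (Fin n → α) → (Fin n → β) → ℝ) (i : Fin n) : ℝ :=
  ∑ x, ∑ y, p x y * Real.logb 2 (condX p 0 i x y / condX p n i x y)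

/-- Conditional mutual information `I(X^i; Y_i | Y^{i-1})`. -/
def cmiXY {n : ℕ} (p : (Fin n → α) → (Fin n → β) → ℝ) (i : Fin n) : ℝ :=
  ∑ x, ∑ y, p x y * Real.logb 2 (condY p 0 i x y / condY p n i x y)

/-- Directed information `I(Y^n → X^n) = Σᵢ I(Y^i; X_i | X^{i-1})`. -/
def dirYX {n : ℕ} (p : (Fin n → α) → (Fin n → β) → ℝ) : ℝ := ∑ i, cmiYX p i

/-- Directed information `I(X^n → Y^n) = Σᵢ I(X^i; Y_i | Y^{i-1})`. -/
def dirXY {n : ℕ} (p : (Fin n → α) → (Fin n → β) → ℝ) : ℝ := ∑ i, cmiXY p i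

/-- Directed information `I(Y^{n-1} → X^n) = Σᵢ I(Y^{i-1}; X_i | X^{i-1})`
(the term for `i = 1` vanishes, so we may sum over all `i`). -/
def dirY1X {n : ℕ} (p : (Fin n → α) → (Fin n → β) → ℝ) : ℝ :=
  ∑ i, ∑ x, ∑ y, p x y * Real.logb 2 (condX p 1 i x y / condX p n i x y)

/-- Mutual information `I(X^n; Y^n)` in bits. -/
def miXY {n : ℕ} (p : (Fin n → α) → (Fin n → β) → ℝ) : ℝ :=
  ∑ x, ∑ y, p x y * Real.logb 2 (p x y / (pX p x * pY p y))

/-- An instantaneous lossless source encoder with causal side information: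
`M i x y` is the binary codeword emitted at time `i`; it depends only on
`(x^i, y^i)`, and for every fixed history `(x^{i-1}, y^i)` the map
`x_i ↦ M i (x^{i-1} x_i) y` is prefix-free (in particular injective). -/
def IsCausalEncoder {n : ℕ}
    (M : Fin n → (Fin n → α) → (Fin n → β) → List Bool) : Prop :=
  (∀ i x x' y y', (∀ j, j ≤ i → x j = x' j) → (∀ j, j ≤ i → y j = y' j) →
    M i x y = M i x' y') ∧
  (∀ i x x' y, (∀ j, j < i → x j = x' j) → x i ≠ x' i →
    ¬ (M i x y <+: M i x' y))

/-- `L(x^n||y^n)`: total length of the concatenation `M₁(x₁,y₁) ⋯ Mₙ(xⁿ,yⁿ)`. -/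
def codeLen {n : ℕ} (M : Fin n → (Fin n → α) → (Fin n → β) → List Bool)
    (x : Fin n → α) (y : Fin n → β) : ℝ :=
  ∑ i, ((M i x y).length : ℝ)


-- ===== auxiliary machinery =====

/-- big-endian `m`-bit representation of `n`. -/
def bitsBE (m n : ℕ) : List Bool := (List.range m).map fun i => n.testBit (m - 1 - i)

lemma bitsBE_length (m n : ℕ) : (bitsBE m n).length = m := by simp [bitsBE]

lemma bitsBE_inj {m n1 n2 : ℕ} (h1 : n1 < 2 ^ m) (h2 : n2 < 2 ^ m)
    (h : bitsBE m n1 = bitsBE m n2) : n1 = n2 := by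
  have hb : ∀ i ∈ List.range m, n1.testBit (m - 1 - i) = n2.testBit (m - 1 - i) :=
    List.map_inj_left.mp h
  apply Nat.eq_of_testBit_eq
  intro j
  by_cases hj : j < m
  · have := hb (m - 1 - j) (by simp; omega)
    rwa [show m - 1 - (m - 1 - j) = j by omega] at this
  · rw [Nat.testBit_lt_two_pow (lt_of_lt_of_le h1 (Nat.pow_le_pow_right (by norm_num) (by omega))),
      Nat.testBit_lt_two_pow (lt_of_lt_of_le h2 (Nat.pow_le_pow_right (by norm_num) (by omega)))]

lemma bitsBE_take {m1 m2 n : ℕ} (h : m1 ≤ m2) :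
    (bitsBE m2 n).take m1 = bitsBE m1 (n / 2 ^ (m2 - m1)) := by
  unfold bitsBE
  rw [← List.map_take, List.take_range, min_eq_left h]
  apply List.map_congr_left
  intro i hi
  rw [List.mem_range] at hi
  rw [← Nat.shiftRight_eq_div_pow, Nat.testBit_shiftRight]
  congr 1
  omega

lemma bitsBE_prefix {m1 m2 n1 n2 : ℕ} (hm : m1 ≤ m2) (h1 : n1 < 2 ^ m1)
    (h2 : n2 < 2 ^ m2) (hpre : bitsBE m1 n1 <+: bitsBE m2 n2) :
    n1 = n2 / 2 ^ (m2 - m1) := by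
  rw [List.prefix_iff_eq_take, bitsBE_length, bitsBE_take hm] at hpre
  exact bitsBE_inj h1 (Nat.div_lt_iff_lt_mul (by positivity)|>.mpr
    (by rw [← pow_add, show m1 + (m2 - m1) = m2 by omega]; exact h2)) hpre

section
variable {α : Type} [Fintype α] [DecidableEq α]


lemma kraft_exists (l : α → ℕ) (h1 : ∀ a, 1 ≤ l a)
    (hK : ∑ a, ((2 : ℝ) ^ l a)⁻¹ ≤ 1) :
    ∃ C : α → List Bool, (∀ a, (C a).length = l a) ∧
      ∀ a b, a ≠ b → ¬ (C a <+: C b) := by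
  classical
  set e := Fintype.equivFin α with he
  set M := Finset.univ.sup l with hMdef
  have hM : ∀ a, l a ≤ M := fun a => Finset.le_sup (Finset.mem_univ a)
  -- strict order on symbols
  set lt : α → α → Prop := fun a b => l a < l b ∨ (l a = l b ∧ (e a : ℕ) < e b) with hlt
  have lt_le : ∀ {a b}, lt a b → l a ≤ l b := by
    rintro a b (h | ⟨h, _⟩); omega; omega
  have lt_trich : ∀ {a b : α}, a ≠ b → lt a b ∨ lt b a := by
    intro a b hab
    have : (e a : ℕ) ≠ (e b : ℕ) := by
      simp only [ne_eq, Fin.val_eq_val, EmbeddingLike.apply_eq_iff_eq]; exact hab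
    rcases lt_trichotomy (l a) (l b) with h | h | h
    · exact Or.inl (Or.inl h)
    · rcases lt_or_gt_of_ne this with h' | h'
      · exact Or.inl (Or.inr ⟨h, h'⟩)
      · exact Or.inr (Or.inr ⟨h.symm, h'⟩)
    · exact Or.inr (Or.inl h)
  have lt_irrefl' : ∀ a, ¬ lt a a := by rintro a (h | ⟨_, h⟩) <;> omega
  have lt_trans' : ∀ {a b c}, lt a b → lt b c → lt a c := by
    rintro a b c (h | ⟨h, h'⟩) (g | ⟨g, g'⟩)
    · exact Or.inl (h.trans g)
    · exact Or.inl (g ▸ h)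
    · exact Or.inl (h ▸ g)
    · exact Or.inr ⟨h.trans g, h'.trans g'⟩
  set B : α → Finset α := fun a => Finset.univ.filter (fun b => lt b a) with hB
  set S : α → ℕ := fun a => ∑ b ∈ B a, 2 ^ (M - l b) with hS
  set N : α → ℕ := fun a => S a / 2 ^ (M - l a) with hN
  -- total Kraft sum in ℕ
  have htot : ∑ a : α, 2 ^ (M - l a) ≤ 2 ^ M := by
    have hcast : ((∑ a : α, 2 ^ (M - l a) : ℕ) : ℝ) ≤ ((2 ^ M : ℕ) : ℝ) := by
      push_cast
      calc ∑ a : α, (2 : ℝ) ^ (M - l a)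
          = ∑ a : α, 2 ^ M * ((2 : ℝ) ^ l a)⁻¹ := by
            apply Finset.sum_congr rfl
            intro a _
            rw [eq_comm, mul_inv_eq_iff_eq_mul₀ (by positivity), ← pow_add]
            congr 1
            have := hM a; omega
        _ = 2 ^ M * ∑ a : α, ((2 : ℝ) ^ l a)⁻¹ := by rw [Finset.mul_sum]
        _ ≤ 2 ^ M * 1 := by
            apply mul_le_mul_of_nonneg_left hK (by positivity)
        _ = 2 ^ M := mul_one _
    exact_mod_cast hcast
  -- S a + own term ≤ S b when lt a b
  have hSlt : ∀ {a b}, lt a b → S a + 2 ^ (M - l a) ≤ S b := by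
    intro a b hab
    have hsub : insert a (B a) ⊆ B b := by
      intro c hc
      rcases Finset.mem_insert.mp hc with rfl | hc
      · simp [hB, hab]
      · have : lt c a := (Finset.mem_filter.mp hc).2
        simp [hB, lt_trans' this hab]
    calc S a + 2 ^ (M - l a) = ∑ c ∈ insert a (B a), 2 ^ (M - l c) := by
          rw [Finset.sum_insert (by simp [hB, lt_irrefl' a])]; ring
      _ ≤ S b := Finset.sum_le_sum_of_subset hsub
  have hNbound : ∀ a, N a < 2 ^ l a := by
    intro a
    rw [hN]
    apply Nat.div_lt_iff_lt_mul (by positivity) |>.mpr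
    rw [← pow_add, show l a + (M - l a) = M by have := hM a; omega]
    have hsub : insert a (B a) ⊆ Finset.univ := Finset.subset_univ _
    have : S a + 2 ^ (M - l a) ≤ ∑ c : α, 2 ^ (M - l c) := by
      calc S a + 2 ^ (M - l a) = ∑ c ∈ insert a (B a), 2 ^ (M - l c) := by
            rw [Finset.sum_insert (by simp [hB, lt_irrefl' a])]; ring
        _ ≤ _ := Finset.sum_le_sum_of_subset hsub
    have hpos : 0 < 2 ^ (M - l a) := by positivity
    omega
  -- key inequality
  have hkey : ∀ {a b}, lt a b → N a + 1 ≤ N b / 2 ^ (l b - l a) := by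
    intro a b hab
    have hle := lt_le hab
    have hMa := hM a; have hMb := hM b
    have : N b / 2 ^ (l b - l a) = S b / 2 ^ (M - l a) := by
      rw [hN, Nat.div_div_eq_div_mul, ← pow_add,
        show M - l b + (l b - l a) = M - l a by omega]
    rw [this]
    have h2 : (S a + 2 ^ (M - l a)) / 2 ^ (M - l a) ≤ S b / 2 ^ (M - l a) :=
      Nat.div_le_div_right (hSlt hab)
    rwa [Nat.add_div_right _ (by positivity)] at h2
  refine ⟨fun a => bitsBE (l a) (N a), fun a => by
    simpa using (by simp [bitsBE] : (bitsBE (l a) (N a)).length = l a), ?_⟩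
  intro a b hab hpre
  have hlen : l a ≤ l b := by
    have := hpre.length_le
    simpa [bitsBE] using this
  rcases lt_trich hab with h | h
  · have := bitsBE_prefix hlen (hNbound a) (hNbound b) hpre
    have := hkey h
    omega
  · have hge : l b ≤ l a := lt_le h
    have heq : l a = l b := le_antisymm hlen hge
    have : bitsBE (l a) (N a) = bitsBE (l b) (N b) :=
      hpre.eq_of_length (by simp [bitsBE, heq])
    have hNeq : N a = N b := bitsBE_inj (hNbound a) (heq ▸ hNbound b) (heq ▸ this)
    have := hkey h
    rw [show l a - l b = 0 by omega, pow_zero, Nat.div_one] at this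
    omega
end

section PR
variable {n : ℕ} {p : (Fin n → α) → (Fin n → β) → ℝ}

lemma pr_nonneg (hp0 : ∀ x y, 0 ≤ p x y) (E : (Fin n → α) → (Fin n → β) → Prop) :
    0 ≤ pr p E := by
  apply Finset.sum_nonneg; intro x _; apply Finset.sum_nonneg; intro y _
  split <;> [exact hp0 x y; exact le_rfl]

lemma pr_mono (hp0 : ∀ x y, 0 ≤ p x y) {E F : (Fin n → α) → (Fin n → β) → Prop}
    (h : ∀ x y, E x y → F x y) : pr p E ≤ pr p F := by
  apply Finset.sum_le_sum; intro x _; apply Finset.sum_le_sum; intro y _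
  by_cases hE : E x y
  · rw [if_pos hE, if_pos (h x y hE)]
  · rw [if_neg hE]; split <;> [exact hp0 x y; exact le_rfl]

lemma le_pr (hp0 : ∀ x y, 0 ≤ p x y) {E : (Fin n → α) → (Fin n → β) → Prop}
    {x : Fin n → α} {y : Fin n → β} (h : E x y) : p x y ≤ pr p E := by
  calc p x y = (if E x y then p x y else 0) := (if_pos h).symm
    _ ≤ ∑ y', if E x y' then p x y' else 0 :=
        Finset.single_le_sum (f := fun y' => if E x y' then p x y' else 0)
          (fun y' _ => by show (0:ℝ) ≤ if E x y' then p x y' else 0; split <;> [exact hp0 x y'; exact le_rfl])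
          (Finset.mem_univ y)
    _ ≤ ∑ x', ∑ y', if E x' y' then p x' y' else 0 :=
        Finset.single_le_sum (f := fun x' => ∑ y', if E x' y' then p x' y' else 0)
          (fun x' _ => Finset.sum_nonneg fun y' _ => by
            show (0:ℝ) ≤ if E x' y' then p x' y' else 0; split <;> [exact hp0 x' y'; exact le_rfl])
          (Finset.mem_univ x)
    _ = pr p E := rfl

lemma pr_congr {E F : (Fin n → α) → (Fin n → β) → Prop}
    (h : ∀ x y, E x y ↔ F x y) : pr p E = pr p F := by
  unfold pr
  apply Finset.sum_congr rfl; intro x _; apply Finset.sum_congr rfl; intro y _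
  simp only [h]

lemma sum_pr_fiber (i : Fin n) (P : (Fin n → α) → Prop) (Q : (Fin n → β) → Prop) :
    ∑ s : α, pr p (fun a b => P a ∧ a i = s ∧ Q b) = pr p (fun a b => P a ∧ Q b) := by
  unfold pr
  rw [Finset.sum_comm]
  apply Finset.sum_congr rfl; intro a _
  rw [Finset.sum_comm]
  apply Finset.sum_congr rfl; intro b _
  trans (∑ s : α, if a i = s then (if P a ∧ Q b then p a b else 0) else 0)
  · apply Finset.sum_congr rfl; intro s _
    by_cases h1 : a i = s <;> by_cases h2 : P a ∧ Q b <;> simp [h1, h2] <;> try tauto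
  · rw [Finset.sum_ite_eq]; simp

end PR

section QF
variable {n : ℕ} (p : (Fin n → α) → (Fin n → β) → ℝ)

/-- conditional pmf of the `i`-th symbol given history, as a function of the symbol. -/
def qf (i : Fin n) (x : Fin n → α) (y : Fin n → β) : α → ℝ :=
  fun s => condX p 0 i (Function.update x i s) y

lemma qf_apply_self (i : Fin n) (x : Fin n → α) (y : Fin n → β) :
    qf p i x y (x i) = condX p 0 i x y := by
  unfold qf; rw [Function.update_eq_self]

lemma qf_eq_div (i : Fin n) (x : Fin n → α) (y : Fin n → β) (s : α) :
    qf p i x y s =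
      pr p (fun x' y' => (∀ j, j < i → x' j = x j) ∧ x' i = s ∧
        ∀ j : Fin n, (j : ℕ) + 0 ≤ (i : ℕ) → y' j = y j) /
      pr p (fun x' y' => (∀ j, j < i → x' j = x j) ∧
        ∀ j : Fin n, (j : ℕ) + 0 ≤ (i : ℕ) → y' j = y j) := by
  unfold qf condX
  congr 1
  · apply pr_congr; intro a b
    constructor
    · rintro ⟨h1, h2, h3⟩
      exact ⟨fun j hj => by rw [h1 j hj, Function.update_of_ne (ne_of_lt hj)],
        by rw [h2, Function.update_self], h3⟩
    · rintro ⟨h1, h2, h3⟩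
      exact ⟨fun j hj => by rw [h1 j hj, Function.update_of_ne (ne_of_lt hj)],
        by rw [h2, Function.update_self], h3⟩
  · apply pr_congr; intro a b
    constructor
    · rintro ⟨h1, h3⟩
      exact ⟨fun j hj => by rw [h1 j hj, Function.update_of_ne (ne_of_lt hj)], h3⟩
    · rintro ⟨h1, h3⟩
      exact ⟨fun j hj => by rw [h1 j hj, Function.update_of_ne (ne_of_lt hj)], h3⟩

lemma qf_congr (i : Fin n) (x x' : Fin n → α) (y y' : Fin n → β)
    (hx : ∀ j, j < i → x j = x' j) (hy : ∀ j : Fin n, (j : ℕ) ≤ (i : ℕ) → y j = y' j) :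
    qf p i x y = qf p i x' y' := by
  funext s
  rw [qf_eq_div, qf_eq_div]
  congr 1
  · apply pr_congr; intro a b
    constructor
    · rintro ⟨h1, h2, h3⟩
      exact ⟨fun j hj => by rw [h1 j hj, hx j hj], h2,
        fun j hj => by rw [h3 j hj, hy j (by omega)]⟩
    · rintro ⟨h1, h2, h3⟩
      exact ⟨fun j hj => by rw [h1 j hj, ← hx j hj], h2,
        fun j hj => by rw [h3 j hj, ← hy j (by omega)]⟩
  · apply pr_congr; intro a b
    constructor
    · rintro ⟨h1, h3⟩
      exact ⟨fun j hj => by rw [h1 j hj, hx j hj],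
        fun j hj => by rw [h3 j hj, hy j (by omega)]⟩
    · rintro ⟨h1, h3⟩
      exact ⟨fun j hj => by rw [h1 j hj, ← hx j hj],
        fun j hj => by rw [h3 j hj, ← hy j (by omega)]⟩

lemma qf_good (hp : IsPmf p) (i : Fin n) (x : Fin n → α) (y : Fin n → β) :
    (∀ s, qf p i x y s = 0) ∨
      ((∀ s, 0 ≤ qf p i x y s ∧ qf p i x y s ≤ 1) ∧ ∑ s, qf p i x y s = 1) := by
  set D := pr p (fun x' y' => (∀ j, j < i → x' j = x j) ∧
      ∀ j : Fin n, (j : ℕ) + 0 ≤ (i : ℕ) → y' j = y j) with hD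
  have hD0 : 0 ≤ D := pr_nonneg hp.1 _
  rcases eq_or_lt_of_le hD0 with hDz | hDpos
  · left; intro s
    rw [qf_eq_div, ← hD, ← hDz, div_zero]
  · right
    have hnum : ∀ s, 0 ≤ pr p (fun x' y' => (∀ j, j < i → x' j = x j) ∧ x' i = s ∧
        ∀ j : Fin n, (j : ℕ) + 0 ≤ (i : ℕ) → y' j = y j) := fun s => pr_nonneg hp.1 _
    have hnumle : ∀ s, pr p (fun x' y' => (∀ j, j < i → x' j = x j) ∧ x' i = s ∧
        ∀ j : Fin n, (j : ℕ) + 0 ≤ (i : ℕ) → y' j = y j) ≤ D := fun s =>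
      pr_mono hp.1 (fun a b h => ⟨h.1, h.2.2⟩)
    constructor
    · intro s
      rw [qf_eq_div, ← hD]
      exact ⟨div_nonneg (hnum s) hD0, div_le_one_of_le₀ (hnumle s) hD0⟩
    · have := sum_pr_fiber (p := p) i (fun a => ∀ j, j < i → a j = x j)
        (fun b => ∀ j : Fin n, (j : ℕ) + 0 ≤ (i : ℕ) → b j = y j)
      calc ∑ s, qf p i x y s = (∑ s, pr p (fun x' y' => (∀ j, j < i → x' j = x j) ∧
            x' i = s ∧ ∀ j : Fin n, (j : ℕ) + 0 ≤ (i : ℕ) → y' j = y j)) / D := by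
            rw [Finset.sum_div]
            exact Finset.sum_congr rfl fun s _ => by rw [qf_eq_div, hD]
        _ = D / D := by rw [this, hD]
        _ = 1 := div_self (ne_of_gt hDpos)

lemma qf_pos_of_p_pos (hp : IsPmf p) (i : Fin n) (x : Fin n → α) (y : Fin n → β)
    (hpos : 0 < p x y) : 0 < qf p i x y (x i) := by
  rw [qf_eq_div]
  have hnum : p x y ≤ pr p (fun x' y' => (∀ j, j < i → x' j = x j) ∧ x' i = x i ∧
      ∀ j : Fin n, (j : ℕ) + 0 ≤ (i : ℕ) → y' j = y j) :=
    le_pr hp.1 ⟨fun j _ => rfl, rfl, fun j _ => rfl⟩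
  have hden : pr p (fun x' y' => (∀ j, j < i → x' j = x j) ∧ x' i = x i ∧
        ∀ j : Fin n, (j : ℕ) + 0 ≤ (i : ℕ) → y' j = y j) ≤
      pr p (fun x' y' => (∀ j, j < i → x' j = x j) ∧
        ∀ j : Fin n, (j : ℕ) + 0 ≤ (i : ℕ) → y' j = y j) :=
    pr_mono hp.1 (fun a b h => ⟨h.1, h.2.2⟩)
  exact div_pos (lt_of_lt_of_le hpos hnum) (lt_of_lt_of_le (lt_of_lt_of_le hpos hnum) hden)

end QF

section LFUN

/-- code length for a symbol of probability `q > 0`. -/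
def lenPos (q : ℝ) : ℕ := 1 + ⌊Real.logb 2 q⁻¹⌋₊

lemma inv_pow_lenPos_lt {q : ℝ} (hq : 0 < q) : ((2 : ℝ) ^ lenPos q)⁻¹ < q := by
  have h2 : (1 : ℝ) < 2 := one_lt_two
  rw [inv_lt_comm₀ (by positivity) hq]
  have : q⁻¹ = (2 : ℝ) ^ Real.logb 2 q⁻¹ :=
    (Real.rpow_logb (by norm_num) (by norm_num) (by positivity)).symm
  rw [this]
  have hlt : Real.logb 2 q⁻¹ < ((lenPos q : ℕ) : ℝ) := by
    have := Nat.lt_floor_add_one (Real.logb 2 q⁻¹)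
    unfold lenPos
    push_cast
    linarith
  calc (2 : ℝ) ^ Real.logb 2 q⁻¹ < (2 : ℝ) ^ ((lenPos q : ℕ) : ℝ) :=
        Real.rpow_lt_rpow_left_iff h2 |>.mpr hlt
    _ = (2 : ℝ) ^ lenPos q := by rw [Real.rpow_natCast]

lemma lenPos_le {q : ℝ} (hq0 : 0 < q) (hq1 : q ≤ 1) :
    ((lenPos q : ℕ) : ℝ) ≤ 1 - Real.logb 2 q := by
  have ht : 0 ≤ Real.logb 2 q⁻¹ :=
    Real.logb_nonneg one_lt_two (one_le_inv_iff₀.mpr ⟨hq0, hq1⟩)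
  have hfl : (⌊Real.logb 2 q⁻¹⌋₊ : ℝ) ≤ Real.logb 2 q⁻¹ := Nat.floor_le ht
  have hinv : Real.logb 2 q⁻¹ = -Real.logb 2 q := Real.logb_inv _ _
  unfold lenPos
  push_cast
  linarith

/-- length of codewords for zero-probability symbols. -/
def Kzero (q : α → ℝ) : ℕ :=
  if h : ∃ K : ℕ, 1 ≤ K ∧ (Fintype.card α : ℝ) * ((2 : ℝ) ^ K)⁻¹ ≤
      1 - ∑ s, if 0 < q s then ((2 : ℝ) ^ lenPos (q s))⁻¹ else 0 then h.choose else 1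

lemma one_le_Kzero (q : α → ℝ) : 1 ≤ Kzero q := by
  unfold Kzero
  split
  · next h => exact h.choose_spec.1
  · exact le_rfl

/-- the length function used by the encoder, given the conditional pmf of the symbol. -/
def Lfun (q : α → ℝ) : α → ℕ := fun s =>
  if 0 < q s then lenPos (q s) else
    (if ∃ t, 0 < q t then Kzero q else Fintype.card α)

lemma one_le_Lfun (q : α → ℝ) (a : α) : 1 ≤ Lfun q a := by
  unfold Lfun
  split
  · unfold lenPos; omega
  · split
    · exact one_le_Kzero q
    · exact Fintype.card_pos_iff.mpr ⟨a⟩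

lemma kraftSum_Lfun (q : α → ℝ)
    (hq : (∀ s, q s = 0) ∨ ((∀ s, 0 ≤ q s ∧ q s ≤ 1) ∧ ∑ s, q s = 1)) :
    ∑ a, ((2 : ℝ) ^ Lfun q a)⁻¹ ≤ 1 := by
  rcases hq with hq | ⟨hq01, hqsum⟩
  · -- all-zero case: constant length `card α`
    have hL : ∀ a, Lfun q a = Fintype.card α := by
      intro a
      unfold Lfun
      rw [if_neg (by rw [hq a]; exact lt_irrefl 0),
        if_neg (by push_neg; intro t; rw [hq t])]
    calc ∑ a, ((2 : ℝ) ^ Lfun q a)⁻¹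
        = (Fintype.card α : ℝ) * ((2 : ℝ) ^ Fintype.card α)⁻¹ := by
          rw [Finset.sum_congr rfl fun a _ => by rw [hL a]]
          rw [Finset.sum_const, Finset.card_univ, nsmul_eq_mul]
      _ ≤ 1 := by
          rw [← div_eq_mul_inv, div_le_one (by positivity)]
          exact_mod_cast (Nat.lt_two_pow_self (n := Fintype.card α)).le
  · -- good case
    have hex : ∃ t, 0 < q t := by
      by_contra hall
      push_neg at hall
      have : ∀ s, q s = 0 := fun s => le_antisymm (hall s) (hq01 s).1
      rw [Finset.sum_congr rfl fun s _ => this s, Finset.sum_const, smul_zero] at hqsum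
      norm_num at hqsum
    have hL : ∀ a, Lfun q a = if 0 < q a then lenPos (q a) else Kzero q := by
      intro a
      unfold Lfun
      by_cases h : 0 < q a
      · rw [if_pos h, if_pos h]
      · rw [if_neg h, if_neg h, if_pos hex]
    set P := Finset.univ.filter (fun s => 0 < q s) with hPdef
    set Z := Finset.univ.filter (fun s => ¬ 0 < q s) with hZdef
    set T : ℝ := ∑ s ∈ P, ((2 : ℝ) ^ lenPos (q s))⁻¹ with hTdef
    have hPne : P.Nonempty := ⟨hex.choose, by simp [hPdef, hex.choose_spec]⟩
    have hsumPq : ∑ s ∈ P, q s = 1 := by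
      rw [← hqsum, ← Finset.sum_filter_add_sum_filter_not Finset.univ (fun s => 0 < q s) q]
      have : ∑ s ∈ Z, q s = 0 := Finset.sum_eq_zero fun s hs => by
        have := (Finset.mem_filter.mp hs).2
        exact le_antisymm (not_lt.mp this) (hq01 s).1
      rw [← hZdef, ← hPdef, this, add_zero]
    have hT1 : T < 1 := by
      rw [hTdef, ← hsumPq]
      exact Finset.sum_lt_sum_of_nonempty hPne fun s hs =>
        inv_pow_lenPos_lt (Finset.mem_filter.mp hs).2
    have hgap : (1 : ℝ) - ∑ s, (if 0 < q s then ((2 : ℝ) ^ lenPos (q s))⁻¹ else 0) = 1 - T := by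
      rw [hTdef, hPdef, Finset.sum_filter]
    have hEx : ∃ K : ℕ, 1 ≤ K ∧ (Fintype.card α : ℝ) * ((2 : ℝ) ^ K)⁻¹ ≤
        1 - ∑ s, if 0 < q s then ((2 : ℝ) ^ lenPos (q s))⁻¹ else 0 := by
      obtain ⟨K, hK⟩ := pow_unbounded_of_one_lt ((Fintype.card α : ℝ) / (1 - T)) one_lt_two
      refine ⟨K + 1, by omega, ?_⟩
      rw [hgap]
      have h1T : (0 : ℝ) < 1 - T := by linarith
      have h2 : (Fintype.card α : ℝ) < (1 - T) * 2 ^ K := by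
        rw [div_lt_iff₀ h1T] at hK; linarith [hK]
      have h3 : ((2 : ℝ) ^ (K + 1))⁻¹ ≤ ((2 : ℝ) ^ K)⁻¹ := by
        apply inv_anti₀ (by positivity)
        apply pow_le_pow_right₀ one_le_two (by omega)
      calc (Fintype.card α : ℝ) * ((2 : ℝ) ^ (K + 1))⁻¹
          ≤ (Fintype.card α : ℝ) * ((2 : ℝ) ^ K)⁻¹ :=
            mul_le_mul_of_nonneg_left h3 (Nat.cast_nonneg _)
        _ ≤ 1 - T := by
            rw [← div_eq_mul_inv, div_le_iff₀ (by positivity)]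
            nlinarith [h2]
    have hKspec : (Fintype.card α : ℝ) * ((2 : ℝ) ^ Kzero q)⁻¹ ≤ 1 - T := by
      have : Kzero q = hEx.choose := by unfold Kzero; rw [dif_pos hEx]
      rw [this, ← hgap]
      exact hEx.choose_spec.2
    calc ∑ a, ((2 : ℝ) ^ Lfun q a)⁻¹
        = ∑ s ∈ P, ((2 : ℝ) ^ lenPos (q s))⁻¹ + ∑ s ∈ Z, ((2 : ℝ) ^ Kzero q)⁻¹ := by
          rw [← Finset.sum_filter_add_sum_filter_not Finset.univ (fun s => 0 < q s)
            (fun a => ((2 : ℝ) ^ Lfun q a)⁻¹), ← hPdef, ← hZdef]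
          congr 1
          · exact Finset.sum_congr rfl fun s hs => by
              rw [hL s, if_pos (Finset.mem_filter.mp hs).2]
          · exact Finset.sum_congr rfl fun s hs => by
              rw [hL s, if_neg (Finset.mem_filter.mp hs).2]
      _ ≤ T + (1 - T) := by
          apply add_le_add le_rfl
          rw [Finset.sum_const, nsmul_eq_mul]
          calc (Z.card : ℝ) * ((2 : ℝ) ^ Kzero q)⁻¹
              ≤ (Fintype.card α : ℝ) * ((2 : ℝ) ^ Kzero q)⁻¹ := by
                apply mul_le_mul_of_nonneg_right _ (by positivity)
                exact_mod_cast Finset.card_le_univ Z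
            _ ≤ 1 - T := hKspec
      _ = 1 := by ring


section ENC
variable {n : ℕ}

/-- a prefix-free code with prescribed lengths, when the Kraft condition holds. -/
def pickCode (l : α → ℕ) : α → List Bool :=
  if h : (∀ a, 1 ≤ l a) ∧ ∑ a, ((2 : ℝ) ^ l a)⁻¹ ≤ 1 then
    (kraft_exists l h.1 h.2).choose
  else fun _ => [true]

lemma pickCode_spec (l : α → ℕ) (h1 : ∀ a, 1 ≤ l a)
    (h2 : ∑ a, ((2 : ℝ) ^ l a)⁻¹ ≤ 1) :
    (∀ a, (pickCode l a).length = l a) ∧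
      ∀ a b, a ≠ b → ¬ (pickCode l a <+: pickCode l b) := by
  have h : (∀ a, 1 ≤ l a) ∧ ∑ a, ((2 : ℝ) ^ l a)⁻¹ ≤ 1 := ⟨h1, h2⟩
  unfold pickCode
  rw [dif_pos h]
  exact (kraft_exists l h.1 h.2).choose_spec

/-- the encoder. -/
def enc (p : (Fin n → α) → (Fin n → β) → ℝ) :
    Fin n → (Fin n → α) → (Fin n → β) → List Bool :=
  fun i x y => pickCode (Lfun (qf p i x y)) (x i)

end ENC

/-- achievability for instantaneous lossless compression with causal
side information: there is an encoder with
`(1/n) E[L(X^n||Y^n)] ≤ (1/n) Σᵢ (1 + H(Xᵢ | X^{i-1}, Y^i))`. -/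
theorem lossless_causal_coding_achievability {n : ℕ}
    (p : (Fin n → α) → (Fin n → β) → ℝ) (hp : IsPmf p) :
    ∃ M : Fin n → (Fin n → α) → (Fin n → β) → List Bool,
      IsCausalEncoder M ∧
      (n : ℝ)⁻¹ * (∑ x, ∑ y, p x y * codeLen M x y) ≤
        (n : ℝ)⁻¹ * ∑ i, (1 + HcondX p 0 i) := by
  classical
  refine ⟨enc p, ⟨?_, ?_⟩, ?_⟩
  · -- depends only on the history
    intro i x x' y y' hx hy
    unfold enc
    rw [qf_congr p i x x' y y' (fun j hj => hx j (le_of_lt hj))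
        (fun j hj => hy j (by exact hj)), hx i le_rfl]
  · -- prefix-free
    intro i x x' y hx hne hpre
    unfold enc at hpre
    rw [qf_congr p i x x' y y (fun j hj => hx j hj) (fun j _ => rfl)] at hpre
    have hgood : (∀ a, 1 ≤ Lfun (qf p i x' y) a) ∧
        ∑ a, ((2 : ℝ) ^ Lfun (qf p i x' y) a)⁻¹ ≤ 1 :=
      ⟨one_le_Lfun _, kraftSum_Lfun _ (qf_good p hp i x' y)⟩
    exact (pickCode_spec _ hgood.1 hgood.2).2 (x i) (x' i) hne hpre
  · -- expected length bound
    apply mul_le_mul_of_nonneg_left _ (by positivity)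
    have hstep1 : (∑ x, ∑ y, p x y * codeLen (enc p) x y)
        = ∑ i, ∑ x, ∑ y, p x y * ((enc p i x y).length : ℝ) := by
      calc ∑ x, ∑ y, p x y * codeLen (enc p) x y
          = ∑ x, ∑ y, ∑ i, p x y * ((enc p i x y).length : ℝ) := by
            apply Finset.sum_congr rfl; intro x _
            apply Finset.sum_congr rfl; intro y _
            unfold codeLen
            rw [Finset.mul_sum]
        _ = ∑ x, ∑ i, ∑ y, p x y * ((enc p i x y).length : ℝ) :=
            Finset.sum_congr rfl fun x _ => Finset.sum_comm
        _ = ∑ i, ∑ x, ∑ y, p x y * ((enc p i x y).length : ℝ) := Finset.sum_comm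
    rw [hstep1]
    apply Finset.sum_le_sum
    intro i _
    have hrhs : 1 + HcondX p 0 i
        = ∑ x, ∑ y, p x y * (1 - Real.logb 2 (condX p 0 i x y)) := by
      unfold HcondX
      simp only [mul_sub, mul_one, Finset.sum_sub_distrib]
      rw [hp.2]
      ring
    rw [hrhs]
    apply Finset.sum_le_sum; intro x _
    apply Finset.sum_le_sum; intro y _
    rcases eq_or_lt_of_le (hp.1 x y) with hpz | hppos
    · rw [← hpz, zero_mul, zero_mul]
    · have hqpos : 0 < qf p i x y (x i) := qf_pos_of_p_pos p hp i x y hppos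
      have hq1 : qf p i x y (x i) ≤ 1 := by
        rcases qf_good p hp i x y with h | ⟨h, _⟩
        · exact absurd (h (x i)) (ne_of_gt hqpos)
        · exact (h (x i)).2
      have hgood : (∀ a, 1 ≤ Lfun (qf p i x y) a) ∧
          ∑ a, ((2 : ℝ) ^ Lfun (qf p i x y) a)⁻¹ ≤ 1 :=
        ⟨one_le_Lfun _, kraftSum_Lfun _ (qf_good p hp i x y)⟩
      have hlen : ((enc p i x y).length : ℝ) = (Lfun (qf p i x y) (x i) : ℝ) := by
        rw [show enc p i x y = pickCode (Lfun (qf p i x y)) (x i) from rfl,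
          (pickCode_spec _ hgood.1 hgood.2).1 (x i)]
      have hLval : Lfun (qf p i x y) (x i) = lenPos (qf p i x y (x i)) := by
        unfold Lfun
        rw [if_pos hqpos]
      have hbound : ((enc p i x y).length : ℝ)
          ≤ 1 - Real.logb 2 (condX p 0 i x y) := by
        rw [hlen, hLval, ← qf_apply_self p i x y]
        exact lenPos_le hqpos hq1
      exact mul_le_mul_of_nonneg_left hbound (hp.1 x y)
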